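/- arXiv:1103.2545 — 3 statements merged into one kernel-verified Lean document; each statement's English description precedes it below -/
import Mathlib

section
/- For the family of binary distributions with P(A=1,B=1,C=0,D=0) = 1/2-ε, P(A=0,B=1,C=1,D=0) = ε, P(A=1,B=0,C=1,D=0) = ε, P(A=0,B=0,C=1,D=1) = 1/2-ε, as ε → 0 one has I(C:D) - I(A:B) = 2ε + O(ε²) and I(A:B|C) = O(ε²). In particular, for every κ > 0 there exists ε₀ > 0 such that for all 0 < ε < ε₀, I(C:D) > I(A:B) + κ·I(A:B|C). -/
open scoped BigOperators Classical

noncomputable section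

/-- `p` is a probability mass function on the finite type `Ω`. -/
def IsPMF {Ω : Type*} [Fintype Ω] (p : Ω → ℝ) : Prop :=
  (∀ ω, 0 ≤ p ω) ∧ ∑ ω, p ω = 1

/-- Probability of the event `X = s` under `p`. -/
def prOf {Ω S : Type*} [Fintype Ω] [DecidableEq S] (p : Ω → ℝ) (X : Ω → S) (s : S) : ℝ :=
  ∑ ω ∈ Finset.univ.filter (fun ω => X ω = s), p ω

/-- Shannon entropy (in bits) of the random variable `X` under the pmf `p`. -/
def ent {Ω S : Type*} [Fintype Ω] [Fintype S] [DecidableEq S] (p : Ω → ℝ) (X : Ω → S) : ℝ :=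
  - ∑ s : S, prOf p X s * Real.logb 2 (prOf p X s)

/-- Mutual information `I(X:Y) = H(X) + H(Y) - H(X,Y)`. -/
def mi {Ω S T : Type*} [Fintype Ω] [Fintype S] [Fintype T] [DecidableEq S] [DecidableEq T]
    (p : Ω → ℝ) (X : Ω → S) (Y : Ω → T) : ℝ :=
  ent p X + ent p Y - ent p (fun ω => (X ω, Y ω))

/-- Conditional mutual information `I(X:Y|Z) = H(X,Z) + H(Y,Z) - H(X,Y,Z) - H(Z)`. -/
def cmi {Ω S T U : Type*} [Fintype Ω] [Fintype S] [Fintype T] [Fintype U]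
    [DecidableEq S] [DecidableEq T] [DecidableEq U]
    (p : Ω → ℝ) (X : Ω → S) (Y : Ω → T) (Z : Ω → U) : ℝ :=
  ent p (fun ω => (X ω, Z ω)) + ent p (fun ω => (Y ω, Z ω))
    - ent p (fun ω => (X ω, Y ω, Z ω)) - ent p Z

/-- Conditional entropy `H(X|Y) = H(X,Y) - H(Y)`. -/
def condEnt {Ω S T : Type*} [Fintype Ω] [Fintype S] [Fintype T] [DecidableEq S] [DecidableEq T]
    (p : Ω → ℝ) (X : Ω → S) (Y : Ω → T) : ℝ :=
  ent p (fun ω => (X ω, Y ω)) - ent p Y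

/-- The four coordinate random variables on `Bool × Bool × Bool × Bool`. -/
def vA : Bool × Bool × Bool × Bool → Bool := fun ω => ω.1
def vB : Bool × Bool × Bool × Bool → Bool := fun ω => ω.2.1
def vC : Bool × Bool × Bool × Bool → Bool := fun ω => ω.2.2.1
def vD : Bool × Bool × Bool × Bool → Bool := fun ω => ω.2.2.2

/-- The witness distribution of Theorem 3(b). -/
def p12 (ε : ℝ) : Bool × Bool × Bool × Bool → ℝ := fun ω =>
  if ω = (true, true, false, false) then 1 / 2 - ε
  else if ω = (false, true, true, false) then ε
  else if ω = (true, false, true, false) then ε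
  else if ω = (false, false, true, true) then 1 / 2 - ε
  else 0

/-- The key quantity: `g ε = 1 - h(1/2+ε)` where `h` is binary entropy. -/
def gq (ε : ℝ) : ℝ :=
  1 + (1/2+ε)*Real.logb 2 (1/2+ε) + (1/2-ε)*Real.logb 2 (1/2-ε)

lemma logb_half : Real.logb 2 (1/2 : ℝ) = -1 := by
  rw [show (1:ℝ)/2 = 2⁻¹ by norm_num, Real.logb_inv, Real.logb_self_eq_one] <;> norm_num

lemma logb_two_mul (ε : ℝ) (hε : ε ≠ 0) : Real.logb 2 (ε * 2) = Real.logb 2 ε + 1 := by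
  rw [Real.logb_mul hε two_ne_zero, Real.logb_self_eq_one] <;> norm_num

lemma cmi_eq (ε : ℝ) : cmi (p12 ε) vA vB vC = gq ε := by
  simp only [cmi, ent, prOf, p12, gq, Finset.sum_filter, Fintype.sum_prod_type,
    Fintype.sum_bool]
  simp only [vA, vB, vC]
  norm_num
  rw [logb_half]; ring

lemma mi_diff_eq (ε : ℝ) (hε : ε ≠ 0) :
    mi (p12 ε) vC vD - mi (p12 ε) vA vB = 2*ε - 2 * gq ε := by
  simp only [mi, ent, prOf, p12, gq, Finset.sum_filter, Fintype.sum_prod_type,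
    Fintype.sum_bool]
  simp only [vA, vB, vC, vD]
  norm_num
  ring_nf
  rw [logb_two_mul ε hε, logb_half]; ring

lemma gq_bounds (ε : ℝ) (h0 : 0 < ε) (h1 : ε < 1/4) : 0 ≤ gq ε ∧ gq ε ≤ 6 * ε^2 := by
  have hp : (0:ℝ) < 1 + 2*ε := by linarith
  have hq : (0:ℝ) < 1 - 2*ε := by linarith
  have l2 : (0:ℝ) < Real.log 2 := Real.log_pos (by norm_num)
  have u1 : Real.log (1+2*ε) ≤ 2*ε := by
    have := Real.log_le_sub_one_of_pos hp; linarith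
  have u2 : Real.log (1-2*ε) ≤ -(2*ε) := by
    have := Real.log_le_sub_one_of_pos hq; linarith
  have lo1 : 2*ε/(1+2*ε) ≤ Real.log (1+2*ε) := by
    have h := Real.log_le_sub_one_of_pos (x := (1+2*ε)⁻¹) (by positivity)
    rw [Real.log_inv, show (1+2*ε)⁻¹ - 1 = -(2*ε/(1+2*ε)) by field_simp; ring] at h
    linarith
  have lo2 : -(2*ε)/(1-2*ε) ≤ Real.log (1-2*ε) := by
    have h := Real.log_le_sub_one_of_pos (x := (1-2*ε)⁻¹) (by positivity)
    rw [Real.log_inv, show (1-2*ε)⁻¹ - 1 = -(-(2*ε)/(1-2*ε)) by field_simp; ring] at h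
    linarith
  have hf0 : 0 ≤ (1+2*ε)*Real.log (1+2*ε) + (1-2*ε)*Real.log (1-2*ε) := by
    have a1 : 2*ε ≤ (1+2*ε) * Real.log (1+2*ε) := by
      have := mul_le_mul_of_nonneg_left lo1 hp.le
      rwa [mul_div_cancel₀ _ hp.ne'] at this
    have a2 : -(2*ε) ≤ (1-2*ε) * Real.log (1-2*ε) := by
      have := mul_le_mul_of_nonneg_left lo2 hq.le
      rwa [mul_div_cancel₀ _ hq.ne'] at this
    linarith
  have hf8 : (1+2*ε)*Real.log (1+2*ε) + (1-2*ε)*Real.log (1-2*ε) ≤ 8*ε^2 := by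
    nlinarith [mul_le_mul_of_nonneg_left u1 hp.le, mul_le_mul_of_nonneg_left u2 hq.le]
  have hg : gq ε = ((1+2*ε)*Real.log (1+2*ε) + (1-2*ε)*Real.log (1-2*ε)) / (2 * Real.log 2) := by
    have e1 : Real.logb 2 (1/2+ε) = (Real.log (1+2*ε) - Real.log 2) / Real.log 2 := by
      rw [Real.logb, show (1:ℝ)/2+ε = (1+2*ε)/2 by ring, Real.log_div hp.ne' two_ne_zero]
    have e2 : Real.logb 2 (1/2-ε) = (Real.log (1-2*ε) - Real.log 2) / Real.log 2 := by
      rw [Real.logb, show (1:ℝ)/2-ε = (1-2*ε)/2 by ring, Real.log_div hq.ne' two_ne_zero]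
    rw [gq, e1, e2]; field_simp; ring
  constructor
  · rw [hg]; positivity
  · rw [hg]
    rw [div_le_iff₀ (by positivity)]
    have hln : (2:ℝ)/3 < Real.log 2 := by
      have := Real.log_two_gt_d9; linarith
    nlinarith [sq_nonneg ε]

theorem p12_asymptotics :
    (∃ K ε₀ : ℝ, 0 < K ∧ 0 < ε₀ ∧
      ∀ ε : ℝ, 0 < ε → ε < ε₀ →
        |mi (p12 ε) vC vD - mi (p12 ε) vA vB - 2 * ε| ≤ K * ε ^ 2 ∧
          cmi (p12 ε) vA vB vC ≤ K * ε ^ 2) ∧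
    (∀ κ : ℝ, 0 < κ → ∃ ε₀ : ℝ, 0 < ε₀ ∧
      ∀ ε : ℝ, 0 < ε → ε < ε₀ →
        mi (p12 ε) vA vB + κ * cmi (p12 ε) vA vB vC < mi (p12 ε) vC vD) := by
  constructor
  · refine ⟨12, 1/4, by norm_num, by norm_num, fun ε h0 h1 => ?_⟩
    obtain ⟨hg0, hg6⟩ := gq_bounds ε h0 h1
    constructor
    · rw [mi_diff_eq ε h0.ne', show 2*ε - 2*gq ε - 2*ε = -(2*gq ε) by ring, abs_neg,
        abs_of_nonneg (by linarith)]
      linarith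
    · rw [cmi_eq]; linarith
  · intro κ hκ
    refine ⟨min (1/4) (1/(3*(2+κ))), lt_min (by norm_num) (by positivity), fun ε h0 h1 => ?_⟩
    have h14 : ε < 1/4 := lt_of_lt_of_le h1 (min_le_left _ _)
    have hκε : ε < 1/(3*(2+κ)) := lt_of_lt_of_le h1 (min_le_right _ _)
    obtain ⟨hg0, hg6⟩ := gq_bounds ε h0 h14
    have hd := mi_diff_eq ε h0.ne'
    rw [cmi_eq]
    have key : (2+κ) * gq ε < 2*ε := by
      have h2 : (2+κ) * gq ε ≤ (2+κ) * (6*ε^2) :=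
        mul_le_mul_of_nonneg_left hg6 (by linarith)
      have h3 : (2+κ) * (6*ε^2) < 2*ε := by
        have hm : ε * (3*(2+κ)) < 1 :=
          (lt_div_iff₀ (show (0:ℝ) < 3*(2+κ) by linarith)).mp hκε
        nlinarith
      linarith
    linarith


end
end

section
/- Let (A,B,C,D) be jointly distributed random variables on finite sets with joint pmf p such that I(A:B|C) = 0 and H(C|A,B) = 0. Then 0 ≤ H(A,D) + H(B,D) + H(C,D) − H(A,C,D) − H(B,C,D) − H(D). -/
open scoped BigOperators Classical

noncomputable section

/-! ### Auxiliary lemmas -/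

private lemma klow (x y : ℝ) (hx : 0 ≤ x) (hy : 0 ≤ y) (h : 0 < x → 0 < y) :
    x - y ≤ x * Real.log (x / y) := by
  rcases hx.eq_or_lt with rfl | hx'
  · simpa using hy
  · have hy' := h hx'
    have hl : Real.log (y / x) ≤ y / x - 1 := Real.log_le_sub_one_of_pos (div_pos hy' hx')
    have hinv : Real.log (x / y) = - Real.log (y / x) := by
      rw [← Real.log_inv, inv_div]
    have hxy : x * (y / x) = y := by field_simp
    nlinarith [mul_le_mul_of_nonneg_left hl hx]

private lemma klow_eq (x y : ℝ) (hx : 0 ≤ x) (hy : 0 ≤ y) (h : 0 < x → 0 < y)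
    (he : x * Real.log (x / y) = x - y) : x = y := by
  rcases hx.eq_or_lt with rfl | hx'
  · simp at he; linarith
  · have hy' := h hx'
    by_contra hne
    have hr : y / x ≠ 1 := by
      intro hh
      exact hne (by field_simp at hh; linarith)
    have hl : Real.log (y / x) < y / x - 1 := Real.log_lt_sub_one_of_pos (div_pos hy' hx') hr
    have hinv : Real.log (x / y) = - Real.log (y / x) := by
      rw [← Real.log_inv, inv_div]
    have hxy : x * (y / x) = y := by field_simp
    nlinarith [mul_lt_mul_of_pos_left hl hx']

private lemma scomm3 {X Y Z : Type*} [Fintype X] [Fintype Y] [Fintype Z] (f : X → Y → Z → ℝ) :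
    ∑ x, ∑ y, ∑ z, f x y z = ∑ y, ∑ z, ∑ x, f x y z := by
  rw [Finset.sum_comm]
  exact Finset.sum_congr rfl fun _ _ => Finset.sum_comm

private lemma sum3_zero {α β γ : Type*} [Fintype α] [Fintype β] [Fintype γ]
    {f : α → β → γ → ℝ} (h0 : ∀ a b c, 0 ≤ f a b c)
    (h : ∑ a, ∑ b, ∑ c, f a b c = 0) : ∀ a b c, f a b c = 0 := by
  intro a b c
  have h1 : ∀ a, 0 ≤ ∑ b, ∑ c, f a b c :=
    fun a => Finset.sum_nonneg fun b _ => Finset.sum_nonneg fun c _ => h0 a b c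
  have h2 := (Finset.sum_eq_zero_iff_of_nonneg (fun a _ => h1 a)).mp h a (Finset.mem_univ a)
  have h3 := (Finset.sum_eq_zero_iff_of_nonneg
    (fun b _ => Finset.sum_nonneg fun c _ => h0 a b c)).mp h2 b (Finset.mem_univ b)
  exact (Finset.sum_eq_zero_iff_of_nonneg (fun c _ => h0 a b c)).mp h3 c (Finset.mem_univ c)

private lemma ite_sum_le {γ : Type*} [Fintype γ] {P : γ → Prop} [DecidablePred P]
    (hP : ∀ c c', P c → P c' → c = c') (x : ℝ) (hx : 0 ≤ x) :
    ∑ c, (if P c then x else 0) ≤ x := by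
  rw [Finset.sum_ite, Finset.sum_const, Finset.sum_const_zero, add_zero]
  have hcard : (Finset.univ.filter P).card ≤ 1 := by
    apply Finset.card_le_one.mpr
    intro c hc c' hc'
    exact hP c c' (Finset.mem_filter.mp hc).2 (Finset.mem_filter.mp hc').2
  rcases Nat.le_one_iff_eq_zero_or_eq_one.mp hcard with h | h <;> rw [h] <;> simp [hx]

private lemma sum_if_pull {ι : Type*} [Fintype ι] (P : Prop) [Decidable P] (f : ι → ℝ) :
    ∑ i, (if P then f i else 0) = if P then ∑ i, f i else 0 := by
  split <;> simp

private lemma prOf_comp {Ω S T : Type*} [Fintype Ω] [Fintype S] [DecidableEq S] [DecidableEq T]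
    (p : Ω → ℝ) (X : Ω → S) (g : S → T) (t : T) :
    prOf p (fun ω => g (X ω)) t = ∑ s : S, if g s = t then prOf p X s else 0 := by
  unfold prOf
  rw [Finset.sum_filter]
  have h1 : ∀ s : S, (if g s = t then (∑ ω ∈ Finset.univ.filter (fun ω => X ω = s), p ω) else 0)
      = ∑ ω : Ω, if X ω = s then (if g s = t then p ω else 0) else 0 := by
    intro s
    split
    · rw [Finset.sum_filter]
    · simp
  simp_rw [h1]
  rw [Finset.sum_comm]
  apply Finset.sum_congr rfl
  intro ω _
  rw [Finset.sum_ite_eq Finset.univ (X ω) (fun s => if g s = t then p ω else 0)]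
  simp

private lemma ent_mul_log2 {Ω S : Type*} [Fintype Ω] [Fintype S] [DecidableEq S]
    (p : Ω → ℝ) (Y : Ω → S) :
    ent p Y * Real.log 2 = -∑ s, prOf p Y s * Real.log (prOf p Y s) := by
  unfold ent
  rw [neg_mul, Finset.sum_mul, neg_inj]
  apply Finset.sum_congr rfl
  intro s _
  rw [Real.logb]
  have h2 : Real.log 2 ≠ 0 := ne_of_gt (Real.log_pos (by norm_num))
  field_simp

private lemma step_det {α β γ : Type*} [Fintype α] [Fintype β] [Fintype γ]
    (mABC : α → β → γ → ℝ) (mAB : α → β → ℝ)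
    (h0 : ∀ a b c, 0 ≤ mABC a b c)
    (hAB : ∀ a b, mAB a b = ∑ c, mABC a b c)
    (he : ∑ a, ∑ b, ∑ c, mABC a b c * Real.log (mABC a b c)
        = ∑ a, ∑ b, mAB a b * Real.log (mAB a b)) :
    ∀ a b c, mABC a b c = 0 ∨ mABC a b c = mAB a b := by
  have hle : ∀ a b c, mABC a b c ≤ mAB a b := by
    intro a b c
    rw [hAB]
    exact Finset.single_le_sum (fun c _ => h0 a b c) (Finset.mem_univ c)
  have ht0 : ∀ a b c, 0 ≤ mABC a b c * (Real.log (mAB a b) - Real.log (mABC a b c)) := by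
    intro a b c
    rcases (h0 a b c).eq_or_lt with h | h
    · rw [← h]; ring_nf; simp
    · have : Real.log (mABC a b c) ≤ Real.log (mAB a b) :=
        Real.log_le_log h (hle a b c)
      nlinarith
  have hsplit : ∑ a, ∑ b, mAB a b * Real.log (mAB a b)
      = ∑ a, ∑ b, ∑ c, mABC a b c * Real.log (mAB a b) := by
    apply Finset.sum_congr rfl; intro a _
    apply Finset.sum_congr rfl; intro b _
    rw [← Finset.sum_mul, ← hAB]
  have hz : ∑ a, ∑ b, ∑ c, mABC a b c * (Real.log (mAB a b) - Real.log (mABC a b c)) = 0 := by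
    simp_rw [mul_sub, Finset.sum_sub_distrib]
    rw [← hsplit, he]
    ring
  intro a b c
  have := sum3_zero ht0 hz a b c
  rcases (h0 a b c).eq_or_lt with h | h
  · exact Or.inl h.symm
  · right
    have hlog : Real.log (mAB a b) = Real.log (mABC a b c) := by
      rcases mul_eq_zero.mp this with h' | h'
      · linarith
      · linarith
    have h1 : 0 < mAB a b := lt_of_lt_of_le h (hle a b c)
    rw [← Real.exp_log h, ← Real.exp_log h1, hlog]

private lemma step_ci {α β γ : Type*} [Fintype α] [Fintype β] [Fintype γ]
    (mABC : α → β → γ → ℝ) (mAC : α → γ → ℝ) (mBC : β → γ → ℝ) (mC : γ → ℝ)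
    (h0 : ∀ a b c, 0 ≤ mABC a b c)
    (hAC : ∀ a c, mAC a c = ∑ b, mABC a b c)
    (hBC : ∀ b c, mBC b c = ∑ a, mABC a b c)
    (hC : ∀ c, mC c = ∑ a, ∑ b, mABC a b c)
    (he : ∑ a, ∑ b, ∑ c, mABC a b c * Real.log (mABC a b c) + ∑ c, mC c * Real.log (mC c)
        = ∑ a, ∑ c, mAC a c * Real.log (mAC a c) + ∑ b, ∑ c, mBC b c * Real.log (mBC b c)) :
    ∀ a b c, mABC a b c * mC c = mAC a c * mBC b c := by
  have h0AC : ∀ a c, 0 ≤ mAC a c := fun a c => by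
    rw [hAC]; exact Finset.sum_nonneg fun b _ => h0 a b c
  have h0BC : ∀ b c, 0 ≤ mBC b c := fun b c => by
    rw [hBC]; exact Finset.sum_nonneg fun a _ => h0 a b c
  have hCA : ∀ c, mC c = ∑ a, mAC a c := fun c => by
    rw [hC]; exact Finset.sum_congr rfl fun a _ => (hAC a c).symm
  have hCB : ∀ c, mC c = ∑ b, mBC b c := fun c => by
    rw [hC, Finset.sum_comm]; exact Finset.sum_congr rfl fun b _ => (hBC b c).symm
  have h0C : ∀ c, 0 ≤ mC c := fun c => by
    rw [hCA]; exact Finset.sum_nonneg fun a _ => h0AC a c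
  have hleAC : ∀ a b c, mABC a b c ≤ mAC a c := fun a b c => by
    rw [hAC]; exact Finset.single_le_sum (fun b _ => h0 a b c) (Finset.mem_univ b)
  have hleBC : ∀ a b c, mABC a b c ≤ mBC b c := fun a b c => by
    rw [hBC]; exact Finset.single_le_sum (fun a _ => h0 a b c) (Finset.mem_univ a)
  have hleC : ∀ a c, mAC a c ≤ mC c := fun a c => by
    rw [hCA]; exact Finset.single_le_sum (fun a _ => h0AC a c) (Finset.mem_univ a)
  set t : α → β → γ → ℝ := fun a b c =>
    mABC a b c * Real.log (mABC a b c) + mABC a b c * Real.log (mC c)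
      - mABC a b c * Real.log (mAC a c) - mABC a b c * Real.log (mBC b c)
      - (mABC a b c - mAC a c * mBC b c / mC c) with ht
  have hlogpart : ∀ a b c, 0 < mABC a b c →
      mABC a b c * Real.log (mABC a b c) + mABC a b c * Real.log (mC c)
        - mABC a b c * Real.log (mAC a c) - mABC a b c * Real.log (mBC b c)
      = mABC a b c * Real.log (mABC a b c / (mAC a c * mBC b c / mC c)) := by
    intro a b c h
    have h1 : 0 < mAC a c := lt_of_lt_of_le h (hleAC a b c)
    have h2 : 0 < mBC b c := lt_of_lt_of_le h (hleBC a b c)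
    have h3 : 0 < mC c := lt_of_lt_of_le h1 (hleC a c)
    rw [Real.log_div (ne_of_gt h) (by positivity), Real.log_div (by positivity) (ne_of_gt h3),
      Real.log_mul (ne_of_gt h1) (ne_of_gt h2)]
    ring
  have ht0 : ∀ a b c, 0 ≤ t a b c := by
    intro a b c
    rcases (h0 a b c).eq_or_lt with h | h
    · simp only [ht, ← h]
      have : 0 ≤ mAC a c * mBC b c / mC c :=
        div_nonneg (mul_nonneg (h0AC a c) (h0BC b c)) (h0C c)
      simp
      linarith
    · have h1 : 0 < mAC a c := lt_of_lt_of_le h (hleAC a b c)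
      have h2 : 0 < mBC b c := lt_of_lt_of_le h (hleBC a b c)
      have h3 : 0 < mC c := lt_of_lt_of_le h1 (hleC a c)
      have hg : 0 < mAC a c * mBC b c / mC c := by positivity
      have := klow (mABC a b c) (mAC a c * mBC b c / mC c) (le_of_lt h) (le_of_lt hg)
        (fun _ => hg)
      simp only [ht]
      rw [hlogpart a b c h]
      linarith
  have key2 : ∀ c, ∑ a, ∑ b, (mABC a b c - mAC a c * mBC b c / mC c) = 0 := by
    intro c
    simp only [Finset.sum_sub_distrib]
    have e1 : ∑ a, ∑ b, mABC a b c = mC c := (hC c).symm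
    have e2 : ∑ a, ∑ b, mAC a c * mBC b c / mC c = mC c * mC c / mC c := by
      have : ∀ a, ∑ b, mAC a c * mBC b c / mC c = mAC a c * mC c / mC c := by
        intro a
        rw [← Finset.sum_div, ← Finset.mul_sum, ← hCB]
      simp_rw [this]
      rw [← Finset.sum_div, ← Finset.sum_mul, ← hCA]
    rw [e1, e2]
    rcases (h0C c).eq_or_lt with h | h
    · rw [← h]; simp
    · field_simp
      ring
  have hz : ∑ a, ∑ b, ∑ c, t a b c = 0 := by
    have e2 : ∑ a, ∑ b, ∑ c, mABC a b c * Real.log (mC c) = ∑ c, mC c * Real.log (mC c) := by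
      rw [scomm3, scomm3]
      apply Finset.sum_congr rfl; intro c _
      rw [hC c, Finset.sum_mul]
      apply Finset.sum_congr rfl; intro a _
      rw [Finset.sum_mul]
    have e3 : ∑ a, ∑ b, ∑ c, mABC a b c * Real.log (mAC a c)
        = ∑ a, ∑ c, mAC a c * Real.log (mAC a c) := by
      apply Finset.sum_congr rfl; intro a _
      rw [Finset.sum_comm]
      apply Finset.sum_congr rfl; intro c _
      rw [← Finset.sum_mul, ← hAC]
    have e4 : ∑ a, ∑ b, ∑ c, mABC a b c * Real.log (mBC b c)
        = ∑ b, ∑ c, mBC b c * Real.log (mBC b c) := by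
      rw [scomm3]
      apply Finset.sum_congr rfl; intro b _
      apply Finset.sum_congr rfl; intro c _
      rw [← Finset.sum_mul, ← hBC]
    have e5 : ∑ a, ∑ b, ∑ c, (mABC a b c - mAC a c * mBC b c / mC c) = 0 := by
      rw [scomm3, scomm3]
      simp_rw [key2]
      simp
    simp only [ht]
    simp only [Finset.sum_sub_distrib, Finset.sum_add_distrib]
    simp only [Finset.sum_sub_distrib, Finset.sum_add_distrib] at e5
    rw [e2, e3, e4]
    linarith [e5, he]
  intro a b c
  have htz := sum3_zero ht0 hz a b c
  rcases (h0 a b c).eq_or_lt with h | h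
  · simp only [ht, ← h] at htz
    simp at htz
    rw [← h, zero_mul]
    rcases htz with (h' | h') | h'
    · rw [h', zero_mul]
    · rw [h', mul_zero]
    · have h1 : mAC a c ≤ mC c := hleC a c
      have : mAC a c = 0 := le_antisymm (by rw [← h']; exact h1) (h0AC a c)
      rw [this, zero_mul]
  · have h1 : 0 < mAC a c := lt_of_lt_of_le h (hleAC a b c)
    have h2 : 0 < mBC b c := lt_of_lt_of_le h (hleBC a b c)
    have h3 : 0 < mC c := lt_of_lt_of_le h1 (hleC a c)
    have hg : 0 < mAC a c * mBC b c / mC c := by positivity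
    have heq : mABC a b c * Real.log (mABC a b c / (mAC a c * mBC b c / mC c))
        = mABC a b c - mAC a c * mBC b c / mC c := by
      rw [← hlogpart a b c h]
      simp only [ht] at htz
      linarith
    have := klow_eq (mABC a b c) (mAC a c * mBC b c / mC c) (le_of_lt h) (le_of_lt hg)
      (fun _ => hg) heq
    rw [this]
    field_simp

private lemma main_ineq {α β γ δ : Type*} [Fintype α] [Fintype β] [Fintype γ] [Fintype δ] (q : α → β → γ → δ → ℝ)
    (mACD : α → γ → δ → ℝ) (mBCD : β → γ → δ → ℝ) (mCD : γ → δ → ℝ)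
    (mAD : α → δ → ℝ) (mBD : β → δ → ℝ) (mD : δ → ℝ)
    (mABC : α → β → γ → ℝ) (mAC : α → γ → ℝ) (mBC : β → γ → ℝ) (mC : γ → ℝ)
    (hq : ∀ a b c d, 0 ≤ q a b c d)
    (hACD : ∀ a c d, mACD a c d = ∑ b, q a b c d)
    (hBCD : ∀ b c d, mBCD b c d = ∑ a, q a b c d)
    (hCD : ∀ c d, mCD c d = ∑ a, mACD a c d)
    (hCDb : ∀ c d, mCD c d = ∑ b, mBCD b c d)
    (hAD : ∀ a d, mAD a d = ∑ c, mACD a c d)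
    (hBD : ∀ b d, mBD b d = ∑ c, mBCD b c d)
    (hD : ∀ d, mD d = ∑ c, mCD c d)
    (hAC : ∀ a c, mAC a c = ∑ d, mACD a c d)
    (hBC : ∀ b c, mBC b c = ∑ d, mBCD b c d)
    (hC : ∀ c, mC c = ∑ d, mCD c d)
    (hsum : ∑ d, mD d = 1)
    (CI : ∀ a b c, mABC a b c * mC c = mAC a c * mBC b c)
    (DET : ∀ a b (c c' : γ), 0 < mABC a b c → 0 < mABC a b c' → c = c') :
    0 ≤ (∑ a, ∑ c, ∑ d, mACD a c d * Real.log (mACD a c d))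
      + (∑ b, ∑ c, ∑ d, mBCD b c d * Real.log (mBCD b c d))
      + (∑ d, mD d * Real.log (mD d))
      - (∑ a, ∑ d, mAD a d * Real.log (mAD a d))
      - (∑ b, ∑ d, mBD b d * Real.log (mBD b d))
      - (∑ c, ∑ d, mCD c d * Real.log (mCD c d)) := by
  -- nonnegativity of marginals
  have h0ACD : ∀ a c d, 0 ≤ mACD a c d := fun a c d => by
    rw [hACD]; exact Finset.sum_nonneg fun b _ => hq a b c d
  have h0BCD : ∀ b c d, 0 ≤ mBCD b c d := fun b c d => by
    rw [hBCD]; exact Finset.sum_nonneg fun a _ => hq a b c d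
  have h0CD : ∀ c d, 0 ≤ mCD c d := fun c d => by
    rw [hCD]; exact Finset.sum_nonneg fun a _ => h0ACD a c d
  have h0AD : ∀ a d, 0 ≤ mAD a d := fun a d => by
    rw [hAD]; exact Finset.sum_nonneg fun c _ => h0ACD a c d
  have h0BD : ∀ b d, 0 ≤ mBD b d := fun b d => by
    rw [hBD]; exact Finset.sum_nonneg fun c _ => h0BCD b c d
  have h0D : ∀ d, 0 ≤ mD d := fun d => by
    rw [hD]; exact Finset.sum_nonneg fun c _ => h0CD c d
  -- pointwise domination
  have hleACD_CD : ∀ a c d, mACD a c d ≤ mCD c d := fun a c d => by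
    rw [hCD]; exact Finset.single_le_sum (fun a _ => h0ACD a c d) (Finset.mem_univ a)
  have hleBCD_CD : ∀ b c d, mBCD b c d ≤ mCD c d := fun b c d => by
    rw [hCDb]; exact Finset.single_le_sum (fun b _ => h0BCD b c d) (Finset.mem_univ b)
  have hleACD_AD : ∀ a c d, mACD a c d ≤ mAD a d := fun a c d => by
    rw [hAD]; exact Finset.single_le_sum (fun c _ => h0ACD a c d) (Finset.mem_univ c)
  have hleBCD_BD : ∀ b c d, mBCD b c d ≤ mBD b d := fun b c d => by
    rw [hBD]; exact Finset.single_le_sum (fun c _ => h0BCD b c d) (Finset.mem_univ c)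
  have hleCD_D : ∀ c d, mCD c d ≤ mD d := fun c d => by
    rw [hD]; exact Finset.single_le_sum (fun c _ => h0CD c d) (Finset.mem_univ c)
  have hleACD_AC : ∀ a c d, mACD a c d ≤ mAC a c := fun a c d => by
    rw [hAC]; exact Finset.single_le_sum (fun d _ => h0ACD a c d) (Finset.mem_univ d)
  have hleBCD_BC : ∀ b c d, mBCD b c d ≤ mBC b c := fun b c d => by
    rw [hBC]; exact Finset.single_le_sum (fun d _ => h0BCD b c d) (Finset.mem_univ d)
  have hleCD_C : ∀ c d, mCD c d ≤ mC c := fun c d => by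
    rw [hC]; exact Finset.single_le_sum (fun d _ => h0CD c d) (Finset.mem_univ d)
  -- the tilde distribution and hat distribution
  set tq : α → β → γ → δ → ℝ := fun a b c d => mACD a c d * mBCD b c d / mCD c d with htq
  set hp : α → β → γ → δ → ℝ := fun a b c d =>
    if 0 < mABC a b c then mAD a d * mBD b d / mD d else 0 with hhp
  have h0tq : ∀ a b c d, 0 ≤ tq a b c d := fun a b c d =>
    div_nonneg (mul_nonneg (h0ACD a c d) (h0BCD b c d)) (h0CD c d)
  have h0hp : ∀ a b c d, 0 ≤ hp a b c d := by
    intro a b c d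
    simp only [hhp]
    split
    · exact div_nonneg (mul_nonneg (h0AD a d) (h0BD b d)) (h0D d)
    · exact le_refl 0
  -- marginals of tq
  have m1 : ∀ a c d, ∑ b, tq a b c d = mACD a c d := by
    intro a c d
    simp only [htq]
    rw [← Finset.sum_div, ← Finset.mul_sum, ← hCDb]
    rcases (h0CD c d).eq_or_lt with h | h
    · have hz : mACD a c d = 0 := le_antisymm (h ▸ hleACD_CD a c d) (h0ACD a c d)
      rw [hz, ← h]
      simp
    · field_simp
  have m2 : ∀ b c d, ∑ a, tq a b c d = mBCD b c d := by
    intro b c d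
    simp only [htq]
    rw [← Finset.sum_div, ← Finset.sum_mul, ← hCD]
    rcases (h0CD c d).eq_or_lt with h | h
    · have hz : mBCD b c d = 0 := le_antisymm (h ▸ hleBCD_CD b c d) (h0BCD b c d)
      rw [hz, ← h]
      simp
    · field_simp
  have m3 : ∀ c d, ∑ a, ∑ b, tq a b c d = mCD c d := by
    intro c d
    simp_rw [m1]
    exact (hCD c d).symm
  -- pointwise key inequality
  have key : ∀ a b c d, tq a b c d - hp a b c d ≤ tq a b c d *
      (Real.log (mACD a c d) + Real.log (mBCD b c d) + Real.log (mD d)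
        - Real.log (mAD a d) - Real.log (mBD b d) - Real.log (mCD c d)) := by
    intro a b c d
    rcases (h0tq a b c d).eq_or_lt with h | h
    · rw [← h, zero_mul, zero_sub]
      simp only [neg_nonpos]
      exact h0hp a b c d
    · have hCDpos : 0 < mCD c d := by
        rcases (h0CD c d).eq_or_lt with h' | h'
        · exfalso
          have : tq a b c d = 0 := by simp only [htq, ← h', div_zero]
          linarith
        · exact h'
      have hprod : 0 < mACD a c d * mBCD b c d := by
        have : tq a b c d * mCD c d = mACD a c d * mBCD b c d := by
          simp only [htq]; field_simp
        nlinarith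
      have hACDpos : 0 < mACD a c d :=
        lt_of_le_of_ne (h0ACD a c d) (by intro hh; rw [← hh, zero_mul] at hprod; linarith)
      have hBCDpos : 0 < mBCD b c d := by nlinarith
      have hACpos : 0 < mAC a c := lt_of_lt_of_le hACDpos (hleACD_AC a c d)
      have hBCpos : 0 < mBC b c := lt_of_lt_of_le hBCDpos (hleBCD_BC b c d)
      have hCpos : 0 < mC c := lt_of_lt_of_le hCDpos (hleCD_C c d)
      have hABCpos : 0 < mABC a b c := by
        have hci := CI a b c
        nlinarith
      have hADpos : 0 < mAD a d := lt_of_lt_of_le hACDpos (hleACD_AD a c d)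
      have hBDpos : 0 < mBD b d := lt_of_lt_of_le hBCDpos (hleBCD_BD b c d)
      have hDpos : 0 < mD d := lt_of_lt_of_le hCDpos (hleCD_D c d)
      have hhpval : hp a b c d = mAD a d * mBD b d / mD d := by
        simp only [hhp, if_pos hABCpos]
      have hhppos : 0 < mAD a d * mBD b d / mD d := by positivity
      have hlog : Real.log (mACD a c d) + Real.log (mBCD b c d) + Real.log (mD d)
          - Real.log (mAD a d) - Real.log (mBD b d) - Real.log (mCD c d)
          = Real.log (tq a b c d / hp a b c d) := by
        rw [hhpval]
        simp only [htq]
        rw [Real.log_div (by positivity) (by positivity),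
          Real.log_div (by positivity) (ne_of_gt hCDpos),
          Real.log_div (by positivity) (ne_of_gt hDpos),
          Real.log_mul (ne_of_gt hACDpos) (ne_of_gt hBCDpos),
          Real.log_mul (ne_of_gt hADpos) (ne_of_gt hBDpos)]
        ring
      rw [hlog, hhpval]
      exact klow _ _ (le_of_lt h) (le_of_lt (hhpval ▸ hhppos)) (fun _ => hhpval ▸ hhppos)
  -- extra marginal identities
  have hDa : ∀ d, mD d = ∑ a, mAD a d := by
    intro d
    rw [hD]
    have : ∀ c, mCD c d = ∑ a, mACD a c d := fun c => hCD c d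
    simp_rw [this]
    rw [Finset.sum_comm]
    exact Finset.sum_congr rfl fun a _ => (hAD a d).symm
  have hDb : ∀ d, mD d = ∑ b, mBD b d := by
    intro d
    rw [hD]
    have : ∀ c, mCD c d = ∑ b, mBCD b c d := fun c => hCDb c d
    simp_rw [this]
    rw [Finset.sum_comm]
    exact Finset.sum_congr rfl fun b _ => (hBD b d).symm
  -- total mass of tq
  have et : ∑ a, ∑ b, ∑ c, ∑ d, tq a b c d = 1 := by
    have h1 : ∀ a, ∑ b, ∑ c, ∑ d, tq a b c d = ∑ d, mAD a d := by
      intro a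
      rw [scomm3]
      simp_rw [m1]
      rw [Finset.sum_comm]
      exact Finset.sum_congr rfl fun d _ => (hAD a d).symm
    simp_rw [h1]
    rw [Finset.sum_comm]
    calc ∑ d, ∑ a, mAD a d = ∑ d, mD d := Finset.sum_congr rfl fun d _ => (hDa d).symm
    _ = 1 := hsum
  -- total mass of hp is at most 1
  have ep : ∑ a, ∑ b, ∑ c, ∑ d, hp a b c d ≤ 1 := by
    have step1 : ∀ a b, ∑ c, ∑ d, hp a b c d ≤ ∑ d, mAD a d * mBD b d / mD d := by
      intro a b
      rw [Finset.sum_comm]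
      apply Finset.sum_le_sum
      intro d _
      simp only [hhp]
      exact ite_sum_le (DET a b) _ (div_nonneg (mul_nonneg (h0AD a d) (h0BD b d)) (h0D d))
    have step2 : ∑ a, ∑ b, ∑ d, mAD a d * mBD b d / mD d ≤ 1 := by
      have e1 : ∑ a, ∑ b, ∑ d, (mAD a d * mBD b d / mD d) = ∑ d, mD d * mD d / mD d := by
        rw [scomm3, scomm3]
        apply Finset.sum_congr rfl; intro d _
        have h2 : ∀ a, ∑ b, mAD a d * mBD b d / mD d = mAD a d * mD d / mD d := by
          intro a
          rw [← Finset.sum_div, ← Finset.mul_sum, ← hDb d]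
        simp_rw [h2]
        rw [← Finset.sum_div, ← Finset.sum_mul, ← hDa d]
      rw [e1]
      calc ∑ d, mD d * mD d / mD d ≤ ∑ d, mD d := by
            apply Finset.sum_le_sum
            intro d _
            rcases (h0D d).eq_or_lt with h | h
            · rw [← h]; simp
            · rw [mul_div_assoc, div_self (ne_of_gt h), mul_one]
      _ = 1 := hsum
    calc ∑ a, ∑ b, ∑ c, ∑ d, hp a b c d ≤ ∑ a, ∑ b, ∑ d, mAD a d * mBD b d / mD d :=
          Finset.sum_le_sum fun a _ => Finset.sum_le_sum fun b _ => step1 a b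
    _ ≤ 1 := step2
  -- the six regrouping identities
  have G1 : ∑ a, ∑ b, ∑ c, ∑ d, tq a b c d * Real.log (mACD a c d)
      = ∑ a, ∑ c, ∑ d, mACD a c d * Real.log (mACD a c d) := by
    apply Finset.sum_congr rfl; intro a _
    rw [scomm3]
    apply Finset.sum_congr rfl; intro c _
    apply Finset.sum_congr rfl; intro d _
    rw [← Finset.sum_mul, m1]
  have G2 : ∑ a, ∑ b, ∑ c, ∑ d, tq a b c d * Real.log (mBCD b c d)
      = ∑ b, ∑ c, ∑ d, mBCD b c d * Real.log (mBCD b c d) := by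
    rw [Finset.sum_comm]
    apply Finset.sum_congr rfl; intro b _
    rw [scomm3]
    apply Finset.sum_congr rfl; intro c _
    apply Finset.sum_congr rfl; intro d _
    rw [← Finset.sum_mul, m2]
  have G3 : ∑ a, ∑ b, ∑ c, ∑ d, tq a b c d * Real.log (mCD c d)
      = ∑ c, ∑ d, mCD c d * Real.log (mCD c d) := by
    have h1 : ∀ a, ∑ b, ∑ c, ∑ d, tq a b c d * Real.log (mCD c d)
        = ∑ c, ∑ d, ∑ b, tq a b c d * Real.log (mCD c d) := fun a => scomm3 _
    simp_rw [h1]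
    rw [scomm3]
    apply Finset.sum_congr rfl; intro c _
    apply Finset.sum_congr rfl; intro d _
    have h2 : ∀ a, ∑ b, tq a b c d * Real.log (mCD c d)
        = (∑ b, tq a b c d) * Real.log (mCD c d) := fun a => (Finset.sum_mul _ _ _).symm
    simp_rw [h2, m1]
    rw [← Finset.sum_mul, ← hCD]
  have G4 : ∑ a, ∑ b, ∑ c, ∑ d, tq a b c d * Real.log (mD d)
      = ∑ d, mD d * Real.log (mD d) := by
    have h1 : ∀ a, ∑ b, ∑ c, ∑ d, tq a b c d * Real.log (mD d)
        = ∑ c, ∑ d, ∑ b, tq a b c d * Real.log (mD d) := fun a => scomm3 _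
    simp_rw [h1]
    rw [scomm3]
    have h3 : ∀ c d, ∑ a, ∑ b, tq a b c d * Real.log (mD d) = mCD c d * Real.log (mD d) := by
      intro c d
      have h2 : ∀ a, ∑ b, tq a b c d * Real.log (mD d)
          = (∑ b, tq a b c d) * Real.log (mD d) := fun a => (Finset.sum_mul _ _ _).symm
      simp_rw [h2, m1]
      rw [← Finset.sum_mul, ← hCD]
    simp_rw [h3]
    rw [Finset.sum_comm]
    apply Finset.sum_congr rfl; intro d _
    rw [← Finset.sum_mul, ← hD]
  have G5 : ∑ a, ∑ b, ∑ c, ∑ d, tq a b c d * Real.log (mAD a d)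
      = ∑ a, ∑ d, mAD a d * Real.log (mAD a d) := by
    apply Finset.sum_congr rfl; intro a _
    rw [scomm3]
    have h2 : ∀ c d, ∑ b, tq a b c d * Real.log (mAD a d)
        = mACD a c d * Real.log (mAD a d) := by
      intro c d
      rw [← Finset.sum_mul, m1]
    simp_rw [h2]
    rw [Finset.sum_comm]
    apply Finset.sum_congr rfl; intro d _
    rw [← Finset.sum_mul, ← hAD]
  have G6 : ∑ a, ∑ b, ∑ c, ∑ d, tq a b c d * Real.log (mBD b d)
      = ∑ b, ∑ d, mBD b d * Real.log (mBD b d) := by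
    rw [Finset.sum_comm]
    apply Finset.sum_congr rfl; intro b _
    rw [scomm3]
    have h2 : ∀ c d, ∑ a, tq a b c d * Real.log (mBD b d)
        = mBCD b c d * Real.log (mBD b d) := by
      intro c d
      rw [← Finset.sum_mul, m2]
    simp_rw [h2]
    rw [Finset.sum_comm]
    apply Finset.sum_congr rfl; intro d _
    rw [← Finset.sum_mul, ← hBD]
  -- put everything together
  have S1 : ∑ a, ∑ b, ∑ c, ∑ d, (tq a b c d - hp a b c d)
      ≤ ∑ a, ∑ b, ∑ c, ∑ d, tq a b c d *
        (Real.log (mACD a c d) + Real.log (mBCD b c d) + Real.log (mD d)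
          - Real.log (mAD a d) - Real.log (mBD b d) - Real.log (mCD c d)) :=
    Finset.sum_le_sum fun a _ => Finset.sum_le_sum fun b _ =>
      Finset.sum_le_sum fun c _ => Finset.sum_le_sum fun d _ => key a b c d
  have S2 : 0 ≤ ∑ a, ∑ b, ∑ c, ∑ d, (tq a b c d - hp a b c d) := by
    simp only [Finset.sum_sub_distrib]
    linarith [et, ep]
  have S3 : ∑ a, ∑ b, ∑ c, ∑ d, tq a b c d *
        (Real.log (mACD a c d) + Real.log (mBCD b c d) + Real.log (mD d)
          - Real.log (mAD a d) - Real.log (mBD b d) - Real.log (mCD c d))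
      = (∑ a, ∑ c, ∑ d, mACD a c d * Real.log (mACD a c d))
        + (∑ b, ∑ c, ∑ d, mBCD b c d * Real.log (mBCD b c d))
        + (∑ d, mD d * Real.log (mD d))
        - (∑ a, ∑ d, mAD a d * Real.log (mAD a d))
        - (∑ b, ∑ d, mBD b d * Real.log (mBD b d))
        - (∑ c, ∑ d, mCD c d * Real.log (mCD c d)) := by
    simp only [mul_add, mul_sub, Finset.sum_add_distrib, Finset.sum_sub_distrib]
    rw [G1, G2, G3, G4, G5, G6]
  linarith [S1, S2, S3]

theorem kl_intermediate_inequality {Ω α β γ δ : Type*} [Fintype Ω] [Fintype α] [Fintype β] [Fintype γ] [Fintype δ]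
    [DecidableEq α] [DecidableEq β] [DecidableEq γ] [DecidableEq δ]
    (p : Ω → ℝ) (hp : IsPMF p)
    (A : Ω → α) (B : Ω → β) (C : Ω → γ) (D : Ω → δ)
    (h1 : cmi p A B C = 0) (h2 : condEnt p C (fun ω => (A ω, B ω)) = 0) :
    0 ≤ ent p (fun ω => (A ω, D ω)) + ent p (fun ω => (B ω, D ω))
        + ent p (fun ω => (C ω, D ω))
        - ent p (fun ω => (A ω, C ω, D ω)) - ent p (fun ω => (B ω, C ω, D ω))
        - ent p D := by
  classical
  obtain ⟨hp0, hp1⟩ := hp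
  have hq0 : ∀ a b c d, 0 ≤ prOf p (fun ω => (A ω, B ω, C ω, D ω)) (a, b, c, d) := fun a b c d =>
    Finset.sum_nonneg fun ω _ => hp0 ω
  have h0ABC : ∀ a b c, 0 ≤ ∑ d, prOf p (fun ω => (A ω, B ω, C ω, D ω)) (a, b, c, d) :=
    fun a b c => Finset.sum_nonneg fun d _ => hq0 a b c d
  have eACD : ∀ a c d, prOf p (fun ω => (A ω, C ω, D ω)) (a, c, d)
      = ∑ b, prOf p (fun ω => (A ω, B ω, C ω, D ω)) (a, b, c, d) := by
    intro a c d
    rw [prOf_comp p (fun ω => (A ω, B ω, C ω, D ω)) (fun s => (s.1, s.2.2.1, s.2.2.2)) (a, c, d)]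
    simp [Fintype.sum_prod_type, Prod.ext_iff, ite_and, Finset.sum_ite_eq']
  have eBCD : ∀ b c d, prOf p (fun ω => (B ω, C ω, D ω)) (b, c, d)
      = ∑ a, prOf p (fun ω => (A ω, B ω, C ω, D ω)) (a, b, c, d) := by
    intro b c d
    rw [prOf_comp p (fun ω => (A ω, B ω, C ω, D ω)) (fun s => (s.2.1, s.2.2.1, s.2.2.2)) (b, c, d)]
    simp [Fintype.sum_prod_type, Prod.ext_iff, ite_and, Finset.sum_ite_eq']
  have eCD : ∀ c d, prOf p (fun ω => (C ω, D ω)) (c, d)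
      = ∑ a, ∑ b, prOf p (fun ω => (A ω, B ω, C ω, D ω)) (a, b, c, d) := by
    intro c d
    rw [prOf_comp p (fun ω => (A ω, B ω, C ω, D ω)) (fun s => (s.2.2.1, s.2.2.2)) (c, d)]
    simp [Fintype.sum_prod_type, Prod.ext_iff, ite_and, Finset.sum_ite_eq']
  have eAD : ∀ a d, prOf p (fun ω => (A ω, D ω)) (a, d)
      = ∑ b, ∑ c, prOf p (fun ω => (A ω, B ω, C ω, D ω)) (a, b, c, d) := by
    intro a d
    rw [prOf_comp p (fun ω => (A ω, B ω, C ω, D ω)) (fun s => (s.1, s.2.2.2)) (a, d)]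
    simp [Fintype.sum_prod_type, Prod.ext_iff, ite_and, Finset.sum_ite_eq']
  have eBD : ∀ b d, prOf p (fun ω => (B ω, D ω)) (b, d)
      = ∑ a, ∑ c, prOf p (fun ω => (A ω, B ω, C ω, D ω)) (a, b, c, d) := by
    intro b d
    rw [prOf_comp p (fun ω => (A ω, B ω, C ω, D ω)) (fun s => (s.2.1, s.2.2.2)) (b, d)]
    simp [Fintype.sum_prod_type, Prod.ext_iff, ite_and, Finset.sum_ite_eq']
  have eD : ∀ d, prOf p D d
      = ∑ a, ∑ b, ∑ c, prOf p (fun ω => (A ω, B ω, C ω, D ω)) (a, b, c, d) := by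
    intro d
    rw [show prOf p D d = prOf p (fun ω => (A ω, B ω, C ω, D ω).2.2.2) d from rfl]
    rw [prOf_comp p (fun ω => (A ω, B ω, C ω, D ω)) (fun s => s.2.2.2) d]
    simp [Fintype.sum_prod_type, Prod.ext_iff, ite_and, Finset.sum_ite_eq']
  have eABC : ∀ a b c, prOf p (fun ω => (A ω, B ω, C ω)) (a, b, c)
      = ∑ d, prOf p (fun ω => (A ω, B ω, C ω, D ω)) (a, b, c, d) := by
    intro a b c
    rw [prOf_comp p (fun ω => (A ω, B ω, C ω, D ω)) (fun s => (s.1, s.2.1, s.2.2.1)) (a, b, c)]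
    simp [Fintype.sum_prod_type, Prod.ext_iff, ite_and, Finset.sum_ite_eq']
    rw [Finset.sum_comm]
    simp [Finset.sum_ite_eq']
  have eCAB : ∀ a b c, prOf p (fun ω => (C ω, A ω, B ω)) (c, a, b)
      = ∑ d, prOf p (fun ω => (A ω, B ω, C ω, D ω)) (a, b, c, d) := by
    intro a b c
    have h' : prOf p (fun ω => (C ω, A ω, B ω)) (c, a, b)
        = prOf p (fun ω => (A ω, B ω, C ω)) (a, b, c) := by
      unfold prOf
      apply Finset.sum_congr _ (fun _ _ => rfl)
      apply Finset.filter_congr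
      intro ω _
      simp only [Prod.ext_iff]
      tauto
    rw [h', eABC]
  have eAB : ∀ a b, prOf p (fun ω => (A ω, B ω)) (a, b)
      = ∑ c, ∑ d, prOf p (fun ω => (A ω, B ω, C ω, D ω)) (a, b, c, d) := by
    intro a b
    rw [prOf_comp p (fun ω => (A ω, B ω, C ω, D ω)) (fun s => (s.1, s.2.1)) (a, b)]
    simp [Fintype.sum_prod_type, Prod.ext_iff, ite_and, Finset.sum_ite_eq']
    rw [scomm3]
    simp [Finset.sum_ite_eq']
  have eAC : ∀ a c, prOf p (fun ω => (A ω, C ω)) (a, c)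
      = ∑ b, ∑ d, prOf p (fun ω => (A ω, B ω, C ω, D ω)) (a, b, c, d) := by
    intro a c
    rw [prOf_comp p (fun ω => (A ω, B ω, C ω, D ω)) (fun s => (s.1, s.2.2.1)) (a, c)]
    simp [Fintype.sum_prod_type, Prod.ext_iff, ite_and, Finset.sum_ite_eq']
    apply Finset.sum_congr rfl; intro x _
    rw [Finset.sum_comm]
    simp [Finset.sum_ite_eq']
  have eBC : ∀ b c, prOf p (fun ω => (B ω, C ω)) (b, c)
      = ∑ a, ∑ d, prOf p (fun ω => (A ω, B ω, C ω, D ω)) (a, b, c, d) := by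
    intro b c
    rw [prOf_comp p (fun ω => (A ω, B ω, C ω, D ω)) (fun s => (s.2.1, s.2.2.1)) (b, c)]
    simp [Fintype.sum_prod_type, Prod.ext_iff, ite_and, Finset.sum_ite_eq']
    apply Finset.sum_congr rfl; intro x _
    rw [Finset.sum_comm]
    simp [Finset.sum_ite_eq']
  have eC : ∀ c, prOf p C c
      = ∑ a, ∑ b, ∑ d, prOf p (fun ω => (A ω, B ω, C ω, D ω)) (a, b, c, d) := by
    intro c
    rw [show prOf p C c = prOf p (fun ω => (A ω, B ω, C ω, D ω).2.2.1) c from rfl]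
    rw [prOf_comp p (fun ω => (A ω, B ω, C ω, D ω)) (fun s => s.2.2.1) c]
    simp only [Fintype.sum_prod_type]
    apply Finset.sum_congr rfl; intro a _
    apply Finset.sum_congr rfl; intro b _
    rw [Finset.sum_comm]
    simp [Finset.sum_ite_eq']
  have EACD : ent p (fun ω => (A ω, C ω, D ω)) * Real.log 2 = -(∑ a, ∑ c, ∑ d, (∑ b, prOf p (fun ω => (A ω, B ω, C ω, D ω)) (a, b, c, d)) * Real.log (∑ b, prOf p (fun ω => (A ω, B ω, C ω, D ω)) (a, b, c, d))) := by
    rw [ent_mul_log2]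
    simp only [Fintype.sum_prod_type]
    simp_rw [eACD]
  have EBCD : ent p (fun ω => (B ω, C ω, D ω)) * Real.log 2 = -(∑ b, ∑ c, ∑ d, (∑ a, prOf p (fun ω => (A ω, B ω, C ω, D ω)) (a, b, c, d)) * Real.log (∑ a, prOf p (fun ω => (A ω, B ω, C ω, D ω)) (a, b, c, d))) := by
    rw [ent_mul_log2]
    simp only [Fintype.sum_prod_type]
    simp_rw [eBCD]
  have ECD : ent p (fun ω => (C ω, D ω)) * Real.log 2 = -(∑ c, ∑ d, (∑ a, ∑ b, prOf p (fun ω => (A ω, B ω, C ω, D ω)) (a, b, c, d)) * Real.log (∑ a, ∑ b, prOf p (fun ω => (A ω, B ω, C ω, D ω)) (a, b, c, d))) := by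
    rw [ent_mul_log2]
    simp only [Fintype.sum_prod_type]
    simp_rw [eCD]
  have EAD : ent p (fun ω => (A ω, D ω)) * Real.log 2 = -(∑ a, ∑ d, (∑ b, ∑ c, prOf p (fun ω => (A ω, B ω, C ω, D ω)) (a, b, c, d)) * Real.log (∑ b, ∑ c, prOf p (fun ω => (A ω, B ω, C ω, D ω)) (a, b, c, d))) := by
    rw [ent_mul_log2]
    simp only [Fintype.sum_prod_type]
    simp_rw [eAD]
  have EBD : ent p (fun ω => (B ω, D ω)) * Real.log 2 = -(∑ b, ∑ d, (∑ a, ∑ c, prOf p (fun ω => (A ω, B ω, C ω, D ω)) (a, b, c, d)) * Real.log (∑ a, ∑ c, prOf p (fun ω => (A ω, B ω, C ω, D ω)) (a, b, c, d))) := by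
    rw [ent_mul_log2]
    simp only [Fintype.sum_prod_type]
    simp_rw [eBD]
  have ED : ent p D * Real.log 2 = -(∑ d, (∑ a, ∑ b, ∑ c, prOf p (fun ω => (A ω, B ω, C ω, D ω)) (a, b, c, d)) * Real.log (∑ a, ∑ b, ∑ c, prOf p (fun ω => (A ω, B ω, C ω, D ω)) (a, b, c, d))) := by
    rw [ent_mul_log2]
    simp_rw [eD]
  have EABC : ent p (fun ω => (A ω, B ω, C ω)) * Real.log 2 = -(∑ a, ∑ b, ∑ c, (∑ d, prOf p (fun ω => (A ω, B ω, C ω, D ω)) (a, b, c, d)) * Real.log (∑ d, prOf p (fun ω => (A ω, B ω, C ω, D ω)) (a, b, c, d))) := by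
    rw [ent_mul_log2]
    simp only [Fintype.sum_prod_type]
    simp_rw [eABC]
  have ECAB : ent p (fun ω => (C ω, A ω, B ω)) * Real.log 2 = -(∑ c, ∑ a, ∑ b, (∑ d, prOf p (fun ω => (A ω, B ω, C ω, D ω)) (a, b, c, d)) * Real.log (∑ d, prOf p (fun ω => (A ω, B ω, C ω, D ω)) (a, b, c, d))) := by
    rw [ent_mul_log2]
    simp only [Fintype.sum_prod_type]
    simp_rw [eCAB]
  have EAB : ent p (fun ω => (A ω, B ω)) * Real.log 2 = -(∑ a, ∑ b, (∑ c, ∑ d, prOf p (fun ω => (A ω, B ω, C ω, D ω)) (a, b, c, d)) * Real.log (∑ c, ∑ d, prOf p (fun ω => (A ω, B ω, C ω, D ω)) (a, b, c, d))) := by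
    rw [ent_mul_log2]
    simp only [Fintype.sum_prod_type]
    simp_rw [eAB]
  have EAC : ent p (fun ω => (A ω, C ω)) * Real.log 2 = -(∑ a, ∑ c, (∑ b, ∑ d, prOf p (fun ω => (A ω, B ω, C ω, D ω)) (a, b, c, d)) * Real.log (∑ b, ∑ d, prOf p (fun ω => (A ω, B ω, C ω, D ω)) (a, b, c, d))) := by
    rw [ent_mul_log2]
    simp only [Fintype.sum_prod_type]
    simp_rw [eAC]
  have EBC : ent p (fun ω => (B ω, C ω)) * Real.log 2 = -(∑ b, ∑ c, (∑ a, ∑ d, prOf p (fun ω => (A ω, B ω, C ω, D ω)) (a, b, c, d)) * Real.log (∑ a, ∑ d, prOf p (fun ω => (A ω, B ω, C ω, D ω)) (a, b, c, d))) := by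
    rw [ent_mul_log2]
    simp only [Fintype.sum_prod_type]
    simp_rw [eBC]
  have EC : ent p C * Real.log 2 = -(∑ c, (∑ a, ∑ b, ∑ d, prOf p (fun ω => (A ω, B ω, C ω, D ω)) (a, b, c, d)) * Real.log (∑ a, ∑ b, ∑ d, prOf p (fun ω => (A ω, B ω, C ω, D ω)) (a, b, c, d))) := by
    rw [ent_mul_log2]
    simp_rw [eC]
  -- total mass
  have htot : ∑ a, ∑ b, ∑ c, ∑ d, prOf p (fun ω => (A ω, B ω, C ω, D ω)) (a, b, c, d) = 1 := by
    have h : ∑ s : α × β × γ × δ, prOf p (fun ω => (A ω, B ω, C ω, D ω)) s = 1 := by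
      unfold prOf
      rw [Finset.sum_fiberwise]
      exact hp1
    rw [← h]
    simp [Fintype.sum_prod_type]
  -- natural-log version of h1
  have h1n : (∑ a, ∑ b, ∑ c, (∑ d, prOf p (fun ω => (A ω, B ω, C ω, D ω)) (a, b, c, d)) * Real.log (∑ d, prOf p (fun ω => (A ω, B ω, C ω, D ω)) (a, b, c, d)))
        + (∑ c, (∑ a, ∑ b, ∑ d, prOf p (fun ω => (A ω, B ω, C ω, D ω)) (a, b, c, d)) * Real.log (∑ a, ∑ b, ∑ d, prOf p (fun ω => (A ω, B ω, C ω, D ω)) (a, b, c, d)))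
      = (∑ a, ∑ c, (∑ b, ∑ d, prOf p (fun ω => (A ω, B ω, C ω, D ω)) (a, b, c, d)) * Real.log (∑ b, ∑ d, prOf p (fun ω => (A ω, B ω, C ω, D ω)) (a, b, c, d)))
        + (∑ b, ∑ c, (∑ a, ∑ d, prOf p (fun ω => (A ω, B ω, C ω, D ω)) (a, b, c, d)) * Real.log (∑ a, ∑ d, prOf p (fun ω => (A ω, B ω, C ω, D ω)) (a, b, c, d))) := by
    unfold cmi at h1
    have h1' := congrArg (fun z => z * Real.log 2) h1
    simp only [zero_mul] at h1'
    rw [sub_mul, sub_mul, add_mul] at h1'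
    rw [EAC, EBC, EABC, EC] at h1'
    linarith [h1']
  -- natural-log version of h2
  have h2n : (∑ a, ∑ b, ∑ c, (∑ d, prOf p (fun ω => (A ω, B ω, C ω, D ω)) (a, b, c, d)) * Real.log (∑ d, prOf p (fun ω => (A ω, B ω, C ω, D ω)) (a, b, c, d)))
      = ∑ a, ∑ b, (∑ c, ∑ d, prOf p (fun ω => (A ω, B ω, C ω, D ω)) (a, b, c, d)) * Real.log (∑ c, ∑ d, prOf p (fun ω => (A ω, B ω, C ω, D ω)) (a, b, c, d)) := by
    unfold condEnt at h2
    have h2' := congrArg (fun z => z * Real.log 2) h2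
    simp only [zero_mul] at h2'
    rw [sub_mul] at h2'
    rw [ECAB, EAB] at h2'
    have hre : (∑ c, ∑ a, ∑ b, (∑ d, prOf p (fun ω => (A ω, B ω, C ω, D ω)) (a, b, c, d)) * Real.log (∑ d, prOf p (fun ω => (A ω, B ω, C ω, D ω)) (a, b, c, d)))
        = ∑ a, ∑ b, ∑ c, (∑ d, prOf p (fun ω => (A ω, B ω, C ω, D ω)) (a, b, c, d)) * Real.log (∑ d, prOf p (fun ω => (A ω, B ω, C ω, D ω)) (a, b, c, d)) :=
      scomm3 _
    linarith [h2']
  -- determinism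
  have DETraw := step_det (fun a b c => ∑ d, prOf p (fun ω => (A ω, B ω, C ω, D ω)) (a, b, c, d))
    (fun a b => ∑ c, ∑ d, prOf p (fun ω => (A ω, B ω, C ω, D ω)) (a, b, c, d)) h0ABC (fun a b => rfl) h2n
  have DET : ∀ a b (c c' : γ), 0 < (∑ d, prOf p (fun ω => (A ω, B ω, C ω, D ω)) (a, b, c, d)) →
      0 < (∑ d, prOf p (fun ω => (A ω, B ω, C ω, D ω)) (a, b, c', d)) → c = c' := by
    intro a b c c' hc hc'
    by_contra hne
    have r1 := (DETraw a b c).resolve_left (ne_of_gt hc)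
    have r2 := (DETraw a b c').resolve_left (ne_of_gt hc')
    have hpair : (∑ d, prOf p (fun ω => (A ω, B ω, C ω, D ω)) (a, b, c, d)) + (∑ d, prOf p (fun ω => (A ω, B ω, C ω, D ω)) (a, b, c', d))
        ≤ ∑ c'', ∑ d, prOf p (fun ω => (A ω, B ω, C ω, D ω)) (a, b, c'', d) := by
      have hs : ∑ x ∈ ({c, c'} : Finset γ), (∑ d, prOf p (fun ω => (A ω, B ω, C ω, D ω)) (a, b, x, d))
          ≤ ∑ x : γ, ∑ d, prOf p (fun ω => (A ω, B ω, C ω, D ω)) (a, b, x, d) :=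
        Finset.sum_le_sum_of_subset_of_nonneg (Finset.subset_univ _)
          (fun x _ _ => Finset.sum_nonneg fun d _ => hq0 a b x d)
      rwa [Finset.sum_pair hne] at hs
    beta_reduce at r1 r2
    rw [r1] at hc hpair
    rw [r2] at hpair
    linarith
  -- conditional independence
  have CI := step_ci (fun a b c => ∑ d, prOf p (fun ω => (A ω, B ω, C ω, D ω)) (a, b, c, d))
    (fun a c => ∑ b, ∑ d, prOf p (fun ω => (A ω, B ω, C ω, D ω)) (a, b, c, d)) (fun b c => ∑ a, ∑ d, prOf p (fun ω => (A ω, B ω, C ω, D ω)) (a, b, c, d))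
    (fun c => ∑ a, ∑ b, ∑ d, prOf p (fun ω => (A ω, B ω, C ω, D ω)) (a, b, c, d)) h0ABC
    (fun a c => rfl) (fun b c => rfl) (fun c => rfl) h1n
  -- the main inequality
  have main := main_ineq (fun a b c d => prOf p (fun ω => (A ω, B ω, C ω, D ω)) (a, b, c, d))
    (fun a c d => ∑ b, prOf p (fun ω => (A ω, B ω, C ω, D ω)) (a, b, c, d)) (fun b c d => ∑ a, prOf p (fun ω => (A ω, B ω, C ω, D ω)) (a, b, c, d))
    (fun c d => ∑ a, ∑ b, prOf p (fun ω => (A ω, B ω, C ω, D ω)) (a, b, c, d))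
    (fun a d => ∑ b, ∑ c, prOf p (fun ω => (A ω, B ω, C ω, D ω)) (a, b, c, d)) (fun b d => ∑ a, ∑ c, prOf p (fun ω => (A ω, B ω, C ω, D ω)) (a, b, c, d))
    (fun d => ∑ a, ∑ b, ∑ c, prOf p (fun ω => (A ω, B ω, C ω, D ω)) (a, b, c, d))
    (fun a b c => ∑ d, prOf p (fun ω => (A ω, B ω, C ω, D ω)) (a, b, c, d))
    (fun a c => ∑ b, ∑ d, prOf p (fun ω => (A ω, B ω, C ω, D ω)) (a, b, c, d)) (fun b c => ∑ a, ∑ d, prOf p (fun ω => (A ω, B ω, C ω, D ω)) (a, b, c, d))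
    (fun c => ∑ a, ∑ b, ∑ d, prOf p (fun ω => (A ω, B ω, C ω, D ω)) (a, b, c, d))
    hq0 (fun a c d => rfl) (fun b c d => rfl) (fun c d => rfl)
    (fun c d => Finset.sum_comm) (fun a d => Finset.sum_comm) (fun b d => Finset.sum_comm)
    (fun d => by
      show (∑ a, ∑ b, ∑ c, prOf p (fun ω => (A ω, B ω, C ω, D ω)) (a, b, c, d)) = ∑ c, ∑ a, ∑ b, prOf p (fun ω => (A ω, B ω, C ω, D ω)) (a, b, c, d)
      conv_lhs => rw [scomm3]
      conv_lhs => rw [scomm3])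
    (fun a c => Finset.sum_comm) (fun b c => Finset.sum_comm)
    (fun c => by
      show (∑ a, ∑ b, ∑ d, prOf p (fun ω => (A ω, B ω, C ω, D ω)) (a, b, c, d)) = ∑ d, ∑ a, ∑ b, prOf p (fun ω => (A ω, B ω, C ω, D ω)) (a, b, c, d)
      conv_lhs => rw [scomm3]
      conv_lhs => rw [scomm3])
    (by
      rw [Finset.sum_comm]
      rw [← htot]
      apply Finset.sum_congr rfl; intro a _
      rw [scomm3])
    CI DET
  have hlog2 : 0 < Real.log 2 := Real.log_pos (by norm_num)
  have hEmul : 0 ≤ (ent p (fun ω => (A ω, D ω)) + ent p (fun ω => (B ω, D ω))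
      + ent p (fun ω => (C ω, D ω))
      - ent p (fun ω => (A ω, C ω, D ω)) - ent p (fun ω => (B ω, C ω, D ω))
      - ent p D) * Real.log 2 := by
    rw [sub_mul, sub_mul, sub_mul, add_mul, add_mul]
    rw [EAD, EBD, ECD, EACD, EBCD, ED]
    linarith [main]
  by_contra hneg
  push_neg at hneg
  nlinarith [hEmul, hlog2]

end
end

section
/- For the family of binary distributions with P(A=0,B=0,C=0,D=0) = 3ε, P(A=1,B=1,C=0,D=0) = 1/3-ε, P(A=1,B=0,C=1,D=0) = 1/3-ε, P(A=0,B=1,C=0,D=1) = 1/3-ε, the quantity I(C:D) − I(A:B) − I(C:D|A) − I(C:D|B) − I(A:B|C) − I(B:D|C) equals −3ε·log₂(ε) + O(ε) as ε → 0⁺; in particular it is positive for all sufficiently small ε > 0. -/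
open scoped BigOperators Classical

noncomputable section

/-- The witness distribution of Theorem 3(c). -/
def p18 (ε : ℝ) : Bool × Bool × Bool × Bool → ℝ := fun ω =>
  if ω = (false, false, false, false) then 3 * ε
  else if ω = (true, true, false, false) then 1 / 3 - ε
  else if ω = (true, false, true, false) then 1 / 3 - ε
  else if ω = (false, true, false, true) then 1 / 3 - ε
  else 0

/-- The violation of Matúš's inequality for the distribution `p18 ε`. -/
def F18 (ε : ℝ) : ℝ :=
  mi (p18 ε) vC vD - mi (p18 ε) vA vB - cmi (p18 ε) vC vD vA
    - cmi (p18 ε) vC vD vB - cmi (p18 ε) vA vB vC - cmi (p18 ε) vB vD vC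

/-- Auxiliary: `x * log₂ x`. -/
def hh (x : ℝ) : ℝ := x * Real.logb 2 x

lemma F18_eq (ε : ℝ) : F18 ε =
    -(4*((2/3+ε) * Real.logb 2 (2/3+ε)))
    + 5*((1/3+2*ε) * Real.logb 2 (1/3+2*ε))
    + 4*((2/3-2*ε) * Real.logb 2 (2/3-2*ε))
    - (3*ε) * Real.logb 2 (3*ε)
    - 5*((1/3-ε) * Real.logb 2 (1/3-ε)) := by
  simp only [F18, mi, cmi, ent, prOf, Finset.sum_filter]
  simp [p18, vA, vB, vC, vD, Fintype.sum_prod_type]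
  ring_nf

lemma abs_log_le (y : ℝ) (h1 : 1/2 ≤ y) : |Real.log y| ≤ 2 * |y - 1| := by
  have hy : 0 < y := by linarith
  rcases le_or_gt 1 y with h | h
  · rw [abs_of_nonneg (Real.log_nonneg h), abs_of_nonneg (by linarith)]
    have := Real.log_le_sub_one_of_pos hy
    linarith
  · rw [abs_of_nonpos (Real.log_nonpos hy.le h.le), abs_of_neg (by linarith)]
    have h2 : Real.log y⁻¹ ≤ y⁻¹ - 1 := Real.log_le_sub_one_of_pos (by positivity)
    rw [Real.log_inv] at h2
    have h3 : y⁻¹ ≤ 2 := by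
      rw [inv_le_comm₀ hy (by norm_num)]; linarith
    nlinarith [mul_inv_cancel₀ (ne_of_gt hy)]

lemma hh_diff (x δ : ℝ) (hx1 : 1/4 ≤ x) (hx2 : x ≤ 1) (hd1 : 1/4 ≤ x + δ)
    (hd2 : x + δ ≤ 1) (hd : |δ| ≤ 1/8) : |hh (x+δ) - hh x| ≤ 5 * |δ| := by
  have hxpos : 0 < x := by linarith
  have hxd : 0 < x + δ := by linarith
  have hlog2 : (0.6931471803 : ℝ) < Real.log 2 := Real.log_two_gt_d9
  have hdx : |δ| / x ≤ 1/2 := by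
    rw [div_le_iff₀ hxpos]
    have : (1:ℝ)/8 ≤ (1/2) * x := by linarith
    linarith [hd]
  -- bound on logb 2 (x+δ)
  have c1 : |Real.logb 2 (x+δ)| ≤ 2 := by
    have hub : Real.logb 2 (x+δ) ≤ 0 :=
      Real.logb_nonpos (by norm_num) hxd.le hd2
    have hlb : (-2:ℝ) ≤ Real.logb 2 (x+δ) := by
      have h14 : Real.logb 2 (1/4 : ℝ) ≤ Real.logb 2 (x+δ) :=
        Real.logb_le_logb_of_le (by norm_num) (by norm_num) hd1
      have : Real.logb 2 (1/4 : ℝ) = -2 := by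
        rw [show (1/4 : ℝ) = ((2:ℝ)^(2:ℕ))⁻¹ by norm_num, Real.logb_inv, Real.logb_pow,
          Real.logb_self_eq_one (by norm_num)]
        norm_num
      linarith
    rw [abs_le]; exact ⟨by linarith, by linarith⟩
  -- bound on x * (logb (x+δ) - logb x)
  have c2 : |x * (Real.logb 2 (x+δ) - Real.logb 2 x)| ≤ 3 * |δ| := by
    have hdiv : Real.logb 2 (x+δ) - Real.logb 2 x = Real.log ((x+δ)/x) / Real.log 2 := by
      rw [← Real.logb_div (ne_of_gt hxd) (ne_of_gt hxpos)]
      rfl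
    have hy1 : (1:ℝ)/2 ≤ (x+δ)/x := by
      rw [le_div_iff₀ hxpos]
      have : -δ ≤ |δ| := neg_le_abs δ
      nlinarith [hdx, abs_nonneg δ]
    have hym : |(x+δ)/x - 1| = |δ| / x := by
      rw [show (x+δ)/x - 1 = δ / x by (field_simp; ring), abs_div, abs_of_pos hxpos]
    have hl := abs_log_le _ hy1
    rw [hym] at hl
    rw [hdiv, abs_mul, abs_div, abs_of_pos hxpos,
      abs_of_pos (by linarith : (0:ℝ) < Real.log 2)]
    have hxl : x * (|Real.log ((x+δ)/x)| / Real.log 2) ≤ x * ((2 * (|δ|/x)) / Real.log 2) := by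
      apply mul_le_mul_of_nonneg_left _ hxpos.le
      apply div_le_div_of_nonneg_right hl (by linarith)
    have : x * ((2 * (|δ|/x)) / Real.log 2) = 2 * |δ| / Real.log 2 := by
      field_simp
    rw [this] at hxl
    have h23 : 2 * |δ| / Real.log 2 ≤ 3 * |δ| := by
      rw [div_le_iff₀ (by linarith)]
      nlinarith [abs_nonneg δ]
    linarith
  have key : hh (x+δ) - hh x
      = δ * Real.logb 2 (x+δ) + x * (Real.logb 2 (x+δ) - Real.logb 2 x) := by
    simp only [hh]; ring
  calc |hh (x+δ) - hh x|
      ≤ |δ * Real.logb 2 (x+δ)| + |x * (Real.logb 2 (x+δ) - Real.logb 2 x)| := by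
        rw [key]; exact abs_add_le _ _
    _ ≤ 5 * |δ| := by
        rw [abs_mul]
        nlinarith [abs_nonneg δ, abs_nonneg (Real.logb 2 (x+δ))]

theorem p18_asymptotics :
    ∃ K ε₀ : ℝ, 0 < K ∧ 0 < ε₀ ∧
      ∀ ε : ℝ, 0 < ε → ε < ε₀ →
        |F18 ε - (-(3 * ε) * Real.logb 2 ε)| ≤ K * ε ∧ 0 < F18 ε := by
  refine ⟨150, (1/2)^60, by norm_num, by positivity, fun ε hε hε0 => ?_⟩
  have hεsmall : ε < 1/8 := lt_of_lt_of_le hε0 (by norm_num)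
  -- the four increments
  have B1 : |hh (2/3 + ε) - hh (2/3)| ≤ 5 * ε := by
    have := hh_diff (2/3) ε (by norm_num) (by norm_num) (by linarith) (by linarith)
      (by rw [abs_of_pos hε]; linarith)
    rwa [abs_of_pos hε] at this
  have B2 : |hh (1/3 + 2*ε) - hh (1/3)| ≤ 10 * ε := by
    have := hh_diff (1/3) (2*ε) (by norm_num) (by norm_num) (by linarith) (by linarith)
      (by rw [abs_of_pos (by linarith : (0:ℝ) < 2*ε)]; linarith)
    rw [abs_of_pos (by linarith : (0:ℝ) < 2*ε)] at this
    linarith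
  have B3 : |hh (2/3 - 2*ε) - hh (2/3)| ≤ 10 * ε := by
    have := hh_diff (2/3) (-(2*ε)) (by norm_num) (by norm_num) (by linarith) (by linarith)
      (by rw [abs_neg, abs_of_pos (by linarith : (0:ℝ) < 2*ε)]; linarith)
    rw [abs_neg, abs_of_pos (by linarith : (0:ℝ) < 2*ε)] at this
    rw [show (2:ℝ)/3 + -(2*ε) = 2/3 - 2*ε by ring] at this
    linarith
  have B4 : |hh (1/3 - ε) - hh (1/3)| ≤ 5 * ε := by
    have := hh_diff (1/3) (-ε) (by norm_num) (by norm_num) (by linarith) (by linarith)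
      (by rw [abs_neg, abs_of_pos hε]; linarith)
    rw [abs_neg, abs_of_pos hε] at this
    rw [show (1:ℝ)/3 + -ε = 1/3 - ε by ring] at this
    exact this
  have hlog3a : (0:ℝ) ≤ Real.logb 2 3 := Real.logb_nonneg (by norm_num) (by norm_num)
  have hlog3b : Real.logb 2 3 ≤ 2 := by
    have : Real.logb 2 3 ≤ Real.logb 2 4 := Real.logb_le_logb_of_le (by norm_num) (by norm_num) (by norm_num)
    have h4 : Real.logb 2 (4:ℝ) = 2 := by
      rw [show (4:ℝ) = (2:ℝ)^(2:ℕ) by norm_num, Real.logb_pow,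
        Real.logb_self_eq_one (by norm_num)]
      norm_num
    linarith
  have key : F18 ε - (-(3 * ε) * Real.logb 2 ε)
      = -4*(hh (2/3+ε) - hh (2/3)) + 5*(hh (1/3+2*ε) - hh (1/3))
        + 4*(hh (2/3-2*ε) - hh (2/3)) - 5*(hh (1/3-ε) - hh (1/3))
        - 3*ε*Real.logb 2 3 := by
    rw [F18_eq, Real.logb_mul (by norm_num) (ne_of_gt hε)]
    simp only [hh]; ring
  have hbound : |F18 ε - (-(3 * ε) * Real.logb 2 ε)| ≤ 150 * ε := by
    rw [key, abs_le]
    rw [abs_le] at B1 B2 B3 B4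
    constructor <;> nlinarith [hε.le]
  refine ⟨hbound, ?_⟩
  have hlogε : Real.logb 2 ε ≤ -60 := by
    have h1 : Real.logb 2 ε ≤ Real.logb 2 ((1/2:ℝ)^60) :=
      Real.logb_le_logb_of_le (by norm_num) hε (le_of_lt hε0)
    have h2 : Real.logb 2 ((1/2:ℝ)^60) = -60 := by
      rw [show ((1:ℝ)/2)^60 = ((2:ℝ)^(60:ℕ))⁻¹ by norm_num, Real.logb_inv, Real.logb_pow,
        Real.logb_self_eq_one (by norm_num)]
      norm_num
    linarith
  have h5 : -(3 * ε) * Real.logb 2 ε ≥ 180 * ε := by nlinarith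
  have h6 : F18 ε - (-(3 * ε) * Real.logb 2 ε) ≥ -(150 * ε) := by
    have := abs_le.mp hbound
    linarith [this.1]
  linarith
end
end
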